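/- Let w be a real number with 0 ≤ w < 1/2, let L₁ and L₂ be lines (one-dimensional affine subspaces) in ℝ², and let γ ∈ [0, π/2] be the angle between the direction of L₁ and the direction of L₂. If p, q ∈ ℝ² satisfy dist(p, q) = 1 and each of p and q lies within distance w of L₁ and within distance w of L₂, then γ ≤ 2·arcsin(2w) (equivalently, sin(γ/2) ≤ 2w). -/

import Mathlib

noncomputable section

open Real

/-- The Euclidean plane. -/
abbrev E2 := EuclideanSpace ℝ (Fin 2)

open RealInnerProductSpace

lemma myLeOfSqLeSq (x t : ℝ) (hx : 0 ≤ x) (ht : 0 ≤ t) (h : x ^ 2 ≤ t ^ 2) : x ≤ t := by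
  nlinarith

/-- Purely real-variable core inequality. -/
lemma real_key (t A B C D N₁ N₂ X : ℝ) (ht0 : 0 ≤ t)
    (h1 : 1 = A * A + N₁ * N₁) (h2 : 1 = B * B + N₂ * N₂)
    (h3 : 1 = A * A + C * C) (h4 : 1 = B * B + D * D)
    (hN₁ : |N₁| ≤ t) (hN₂ : |N₂| ≤ t)
    (hX : X = A * B + C * D) : 1 - 2 * t ^ 2 ≤ |X| := by
  have hA2 : 1 - t ^ 2 ≤ A ^ 2 := by nlinarith [sq_abs N₁, abs_nonneg N₁]
  have hB2 : 1 - t ^ 2 ≤ B ^ 2 := by nlinarith [sq_abs N₂, abs_nonneg N₂]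
  have hC2 : C ^ 2 ≤ t ^ 2 := by nlinarith
  have hD2 : D ^ 2 ≤ t ^ 2 := by nlinarith
  have hC : |C| ≤ t := by nlinarith [sq_abs C, abs_nonneg C]
  have hD : |D| ≤ t := by nlinarith [sq_abs D, abs_nonneg D]
  have hab : 1 - t ^ 2 ≤ |A * B| := by
    rw [abs_mul]
    rcases le_or_gt (1 - t ^ 2) 0 with h | h
    · exact h.trans (mul_nonneg (abs_nonneg A) (abs_nonneg B))
    · nlinarith [sq_abs A, sq_abs B, abs_nonneg A, abs_nonneg B,
        mul_nonneg (abs_nonneg A) (abs_nonneg B)]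
  have hcd : |C * D| ≤ t ^ 2 := by
    rw [abs_mul]
    calc |C| * |D| ≤ t * t := mul_le_mul hC hD (abs_nonneg D) ht0
    _ = t ^ 2 := by ring
  have h3' : |A * B| - |C * D| ≤ |A * B + C * D| := by
    have := abs_sub_abs_le_abs_sub (A * B) (-(C * D))
    simpa [sub_neg_eq_add] using this
  rw [hX]
  linarith

/-- Parseval-type identity for an orthonormal pair in the 2-dimensional space `E2`. -/
lemma parseval_pair (a b : E2) (ha : ‖a‖ = 1) (hb : ‖b‖ = 1) (hab : ⟪a, b⟫ = 0)
    (x y : E2) : ⟪x, y⟫ = ⟪x, a⟫ * ⟪y, a⟫ + ⟪x, b⟫ * ⟪y, b⟫ := by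
  have haa : ⟪a, a⟫ = 1 := by rw [real_inner_self_eq_norm_sq, ha]; norm_num
  have hbb : ⟪b, b⟫ = 1 := by rw [real_inner_self_eq_norm_sq, hb]; norm_num
  have hba : ⟪b, a⟫ = 0 := by rw [real_inner_comm]; exact hab
  have horth : Orthonormal ℝ ![a, b] := by
    rw [orthonormal_iff_ite]
    intro i j
    fin_cases i <;> fin_cases j <;>
      simp only [Matrix.cons_val_zero, Matrix.cons_val_one, Matrix.head_cons, Fin.isValue] <;>
      norm_num [ha, hb, haa, hbb, hab, hba, -PiLp.inner_apply]
  have hli := horth.linearIndependent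
  have htop : Submodule.span ℝ (Set.range ![a, b]) = ⊤ :=
    hli.span_eq_top_of_card_eq_finrank (by simp [finrank_euclideanSpace_fin])
  have hrange : Set.range ![a, b] = {a, b} := by
    simp [Matrix.range_cons, Matrix.range_empty, Set.pair_comm]
  have hx : x ∈ Submodule.span ℝ ({a, b} : Set E2) := by
    rw [← hrange, htop]; trivial
  obtain ⟨c, d, rfl⟩ := Submodule.mem_span_pair.1 hx
  simp only [inner_add_left, real_inner_smul_left, haa, hbb, hab, hba,
    real_inner_comm a y, real_inner_comm b y]
  ring

/-- Corridor lemma: if `p` and `q` are within `w` of a nonempty line `L`, then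
the component of `q - p` in any unit direction orthogonal to `L.direction` is at most
`2 * w`. -/
lemma corridor (w : ℝ) (L : AffineSubspace ℝ E2) (hne : (L : Set E2).Nonempty)
    (n : E2) (hn : n ∈ L.directionᗮ) (hn1 : ‖n‖ = 1) (p q : E2)
    (hp : Metric.infDist p (L : Set E2) ≤ w) (hq : Metric.infDist q (L : Set E2) ≤ w) :
    |⟪q - p, n⟫| ≤ 2 * w := by
  have hclosed : IsClosed (L : Set E2) :=
    L.isClosed_direction_iff.1 L.direction.closed_of_finiteDimensional
  obtain ⟨a, haL, hpa⟩ := hclosed.exists_infDist_eq_dist hne p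
  obtain ⟨b, hbL, hqb⟩ := hclosed.exists_infDist_eq_dist hne q
  have hba : b - a ∈ L.direction := by
    have := AffineSubspace.vsub_mem_direction hbL haL
    simpa [vsub_eq_sub] using this
  have hban : ⟪b - a, n⟫ = 0 := (Submodule.mem_orthogonal _ _).1 hn _ hba
  have hsplit : q - p = (q - b) + (b - a) + (a - p) := by abel
  have h1 : |⟪q - b, n⟫| ≤ ‖q - b‖ := by
    calc |⟪q - b, n⟫| ≤ ‖q - b‖ * ‖n‖ := abs_real_inner_le_norm _ _
    _ = ‖q - b‖ := by rw [hn1, mul_one]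
  have h2 : |⟪a - p, n⟫| ≤ ‖a - p‖ := by
    calc |⟪a - p, n⟫| ≤ ‖a - p‖ * ‖n‖ := abs_real_inner_le_norm _ _
    _ = ‖a - p‖ := by rw [hn1, mul_one]
  have hqb' : ‖q - b‖ ≤ w := by rw [← dist_eq_norm]; rw [hqb] at hq; exact hq
  have hpa' : ‖a - p‖ ≤ w := by
    rw [← dist_eq_norm, dist_comm]; rw [hpa] at hp; exact hp
  calc |⟪q - p, n⟫| = |⟪q - b, n⟫ + ⟪b - a, n⟫ + ⟪a - p, n⟫| := by
        rw [hsplit, inner_add_left, inner_add_left]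
    _ = |⟪q - b, n⟫ + ⟪a - p, n⟫| := by rw [hban, add_zero]
    _ ≤ |⟪q - b, n⟫| + |⟪a - p, n⟫| := abs_add_le _ _
    _ ≤ ‖q - b‖ + ‖a - p‖ := add_le_add h1 h2
    _ ≤ w + w := add_le_add hqb' hpa'
    _ = 2 * w := by ring

/-- Extract a unit normal to a line, together with the corridor bound. -/
lemma exists_unit_normal (w : ℝ) (L : AffineSubspace ℝ E2)
    (hL : Module.finrank ℝ L.direction = 1) (p q : E2)
    (hp : Metric.infDist p (L : Set E2) ≤ w) (hq : Metric.infDist q (L : Set E2) ≤ w) :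
    ∃ n : E2, ‖n‖ = 1 ∧ n ∈ L.directionᗮ ∧ |⟪q - p, n⟫| ≤ 2 * w := by
  have hne : (L : Set E2).Nonempty := by
    rw [AffineSubspace.nonempty_iff_ne_bot]
    intro h
    rw [h, AffineSubspace.direction_bot] at hL
    simp at hL
  have hfin : Module.finrank ℝ E2 = 2 := finrank_euclideanSpace_fin
  have hsum := L.direction.finrank_add_finrank_orthogonal
  rw [hL, hfin] at hsum
  have hbot : L.directionᗮ ≠ ⊥ := by
    intro h
    rw [h] at hsum
    simp [finrank_bot] at hsum
  obtain ⟨x, hx, hx0⟩ := Submodule.exists_mem_ne_zero_of_ne_bot hbot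
  refine ⟨‖x‖⁻¹ • x, norm_smul_inv_norm hx0, Submodule.smul_mem _ _ hx, ?_⟩
  exact corridor w L hne _ (Submodule.smul_mem _ _ hx) (norm_smul_inv_norm hx0) p q hp hq

theorem angle_le_of_unit_segment_in_two_corridors
    (w : ℝ) (hw0 : 0 ≤ w) (hw : w < 1 / 2)
    (L₁ L₂ : AffineSubspace ℝ E2)
    (hL₁ : Module.finrank ℝ L₁.direction = 1)
    (hL₂ : Module.finrank ℝ L₂.direction = 1)
    (d₁ d₂ : E2) (hd₁ : d₁ ∈ L₁.direction) (hd₁0 : d₁ ≠ 0)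
    (hd₂ : d₂ ∈ L₂.direction) (hd₂0 : d₂ ≠ 0)
    (γ : ℝ) (hγ0 : 0 ≤ γ) (hγπ : γ ≤ π / 2)
    (hγ : InnerProductGeometry.angle d₁ d₂ = γ ∨ InnerProductGeometry.angle d₁ d₂ = π - γ)
    (p q : E2) (hpq : dist p q = 1)
    (hp₁ : Metric.infDist p (L₁ : Set E2) ≤ w) (hp₂ : Metric.infDist p (L₂ : Set E2) ≤ w)
    (hq₁ : Metric.infDist q (L₁ : Set E2) ≤ w) (hq₂ : Metric.infDist q (L₂ : Set E2) ≤ w) :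
    γ ≤ 2 * arcsin (2 * w) := by
  have ht0 : (0 : ℝ) ≤ 2 * w := by linarith
  -- the unit segment vector
  have hvnorm : ‖q - p‖ = 1 := by rw [← dist_eq_norm, dist_comm]; exact hpq
  have hv0 : q - p ≠ 0 := by
    intro h; rw [h] at hvnorm; simp at hvnorm
  -- unit directions
  have hu₁norm : ‖(‖d₁‖⁻¹ • d₁ : E2)‖ = 1 := norm_smul_inv_norm hd₁0
  have hu₂norm : ‖(‖d₂‖⁻¹ • d₂ : E2)‖ = 1 := norm_smul_inv_norm hd₂0
  set v : E2 := q - p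
  set u₁ : E2 := ‖d₁‖⁻¹ • d₁ with hu₁def
  set u₂ : E2 := ‖d₂‖⁻¹ • d₂ with hu₂def
  have hu₁mem : u₁ ∈ L₁.direction := Submodule.smul_mem _ _ hd₁
  have hu₂mem : u₂ ∈ L₂.direction := Submodule.smul_mem _ _ hd₂
  -- unit normals with corridor bounds
  obtain ⟨n₁, hn₁norm, hn₁mem, hn₁bd⟩ := exists_unit_normal w L₁ hL₁ p q hp₁ hq₁
  obtain ⟨n₂, hn₂norm, hn₂mem, hn₂bd⟩ := exists_unit_normal w L₂ hL₂ p q hp₂ hq₂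
  have hun₁ : ⟪u₁, n₁⟫ = 0 := (Submodule.mem_orthogonal _ _).1 hn₁mem _ hu₁mem
  have hun₂ : ⟪u₂, n₂⟫ = 0 := (Submodule.mem_orthogonal _ _).1 hn₂mem _ hu₂mem
  -- a unit vector orthogonal to v
  have hLv : Module.finrank ℝ (AffineSubspace.mk' (0 : E2)
      (Submodule.span ℝ {v})).direction = 1 := by
    rw [AffineSubspace.direction_mk']
    exact finrank_span_singleton hv0
  have hz : Metric.infDist (0 : E2)
      ((AffineSubspace.mk' (0 : E2) (Submodule.span ℝ {v})) : Set E2) ≤ 0 :=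
    le_of_eq (Metric.infDist_zero_of_mem (AffineSubspace.self_mem_mk' _ _))
  obtain ⟨e, henorm, hemem, -⟩ := exists_unit_normal 0 _ hLv 0 0 hz hz
  have hve : ⟪v, e⟫ = 0 := by
    rw [AffineSubspace.direction_mk'] at hemem
    exact (Submodule.mem_orthogonal _ _).1 hemem v (Submodule.mem_span_singleton_self v)
  -- Parseval identities
  have hvv : ⟪v, v⟫ = 1 := by rw [real_inner_self_eq_norm_sq, hvnorm]; norm_num
  have hu₁u₁ : ⟪u₁, u₁⟫ = 1 := by rw [real_inner_self_eq_norm_sq, hu₁norm]; norm_num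
  have hu₂u₂ : ⟪u₂, u₂⟫ = 1 := by rw [real_inner_self_eq_norm_sq, hu₂norm]; norm_num
  have hP₁ : (1 : ℝ) = ⟪v, u₁⟫ * ⟪v, u₁⟫ + ⟪v, n₁⟫ * ⟪v, n₁⟫ := by
    rw [← hvv]; exact parseval_pair u₁ n₁ hu₁norm hn₁norm hun₁ v v
  have hP₂ : (1 : ℝ) = ⟪v, u₂⟫ * ⟪v, u₂⟫ + ⟪v, n₂⟫ * ⟪v, n₂⟫ := by
    rw [← hvv]; exact parseval_pair u₂ n₂ hu₂norm hn₂norm hun₂ v v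
  have hQ₁ : (1 : ℝ) = ⟪u₁, v⟫ * ⟪u₁, v⟫ + ⟪u₁, e⟫ * ⟪u₁, e⟫ := by
    rw [← hu₁u₁]; exact parseval_pair v e hvnorm henorm hve u₁ u₁
  have hQ₂ : (1 : ℝ) = ⟪u₂, v⟫ * ⟪u₂, v⟫ + ⟪u₂, e⟫ * ⟪u₂, e⟫ := by
    rw [← hu₂u₂]; exact parseval_pair v e hvnorm henorm hve u₂ u₂
  have hcross : ⟪u₁, u₂⟫ = ⟪u₁, v⟫ * ⟪u₂, v⟫ + ⟪u₁, e⟫ * ⟪u₂, e⟫ :=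
    parseval_pair v e hvnorm henorm hve u₁ u₂
  have hc₁ : ⟪v, u₁⟫ = ⟪u₁, v⟫ := real_inner_comm u₁ v
  have hc₂ : ⟪v, u₂⟫ = ⟪u₂, v⟫ := real_inner_comm u₂ v
  rw [hc₁] at hP₁
  rw [hc₂] at hP₂
  -- core inequality
  have habs : 1 - 2 * (2 * w) ^ 2 ≤ |⟪u₁, u₂⟫| :=
    real_key (2 * w) ⟪u₁, v⟫ ⟪u₂, v⟫ ⟪u₁, e⟫ ⟪u₂, e⟫ ⟪v, n₁⟫ ⟪v, n₂⟫ ⟪u₁, u₂⟫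
      ht0 hP₁ hP₂ hQ₁ hQ₂ hn₁bd hn₂bd hcross
  -- relate to cos γ
  have hcosang : cos (InnerProductGeometry.angle d₁ d₂) = ⟪u₁, u₂⟫ := by
    rw [InnerProductGeometry.cos_angle, hu₁def, hu₂def, real_inner_smul_left,
      real_inner_smul_right]
    have h₁ : ‖d₁‖ ≠ 0 := norm_ne_zero_iff.2 hd₁0
    have h₂ : ‖d₂‖ ≠ 0 := norm_ne_zero_iff.2 hd₂0
    field_simp
  have hcosnn : 0 ≤ cos γ :=
    Real.cos_nonneg_of_mem_Icc ⟨by linarith [Real.pi_pos], hγπ⟩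
  have hcosγ : cos γ = |⟪u₁, u₂⟫| := by
    rcases hγ with h | h
    · rw [h] at hcosang
      rw [← hcosang, abs_of_nonneg hcosnn]
    · have hneg : ⟪u₁, u₂⟫ = -cos γ := by rw [← hcosang, h, Real.cos_pi_sub]
      rw [hneg, abs_neg, abs_of_nonneg hcosnn]
  have hkey : 1 - 2 * (2 * w) ^ 2 ≤ cos γ := by rw [hcosγ]; exact habs
  -- conclude: sin (γ/2) ≤ 2w
  have hsin : sin (γ / 2) ≤ 2 * w := by
    have h2 : cos (2 * (γ / 2)) = 2 * cos (γ / 2) ^ 2 - 1 := Real.cos_two_mul (γ / 2)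
    have h3 : sin (γ / 2) ^ 2 + cos (γ / 2) ^ 2 = 1 := Real.sin_sq_add_cos_sq (γ / 2)
    have h4 : (2 : ℝ) * (γ / 2) = γ := by ring
    rw [h4] at h2
    have hsq : sin (γ / 2) ^ 2 ≤ (2 * w) ^ 2 := by linarith
    have hsnn : 0 ≤ sin (γ / 2) := by
      apply Real.sin_nonneg_of_nonneg_of_le_pi (by linarith)
      linarith [Real.pi_pos]
    exact myLeOfSqLeSq _ _ hsnn ht0 hsq
  -- finish with arcsin monotonicity
  have h1 : arcsin (sin (γ / 2)) = γ / 2 := by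
    apply Real.arcsin_sin
    · linarith [Real.pi_pos]
    · linarith
  have harc : γ / 2 ≤ arcsin (2 * w) := by
    rw [← h1]
    exact Real.monotone_arcsin hsin
  linarith
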